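/- Let C be a channel from a finite set X to a finite set Y, and let Obs₁ : Y → Z₁ and Obs₂ : Y → Z₂ be observers such that Obs₁ is composition-refined by Obs₂ (there exists a channel R : Z₂ → Z₁ with Obs₁ = Obs₂ · R). Then the observed min-capacities satisfy MC(C·Obs₁) ≤ MC(C·Obs₂), where MC is the supremum of the min-entropy leakage over all priors. -/

import Mathlib

open scoped Classical BigOperators

noncomputable section

/-- A (row-stochastic) channel matrix. -/
def IsChannel {X Y : Type*} [Fintype Y] (C : X → Y → ℝ) : Prop :=
  (∀ x y, 0 ≤ C x y) ∧ ∀ x, ∑ y, C x y = 1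

/-- A prior (probability distribution). -/
def IsPrior {X : Type*} [Fintype X] (π : X → ℝ) : Prop :=
  (∀ x, 0 ≤ π x) ∧ ∑ x, π x = 1

/-- Cascade composition of channels (matrix product). -/
def cascade {X Y Z : Type*} [Fintype Y] (C : X → Y → ℝ) (D : Y → Z → ℝ) : X → Z → ℝ :=
  fun x z => ∑ y, C x y * D y z

/-- Mutual information (base-2), with `0`-probability terms taken to be `0`. -/
def MI {X Y : Type*} [Fintype X] [Fintype Y] (π : X → ℝ) (C : X → Y → ℝ) : ℝ :=
  ∑ x, ∑ y, if π x * C x y = 0 then 0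
    else π x * C x y * Real.logb 2 (C x y / ∑ x', π x' * C x' y)

/-- Prior vulnerability. -/
def Vprior {X : Type*} [Fintype X] [Nonempty X] (π : X → ℝ) : ℝ :=
  Finset.univ.sup' Finset.univ_nonempty π

/-- Posterior vulnerability. -/
def Vpost {X Y : Type*} [Fintype X] [Nonempty X] [Fintype Y]
    (π : X → ℝ) (C : X → Y → ℝ) : ℝ :=
  ∑ y, Finset.univ.sup' Finset.univ_nonempty (fun x => π x * C x y)

/-- Min-entropy leakage. -/
def MEL {X Y : Type*} [Fintype X] [Nonempty X] [Fintype Y]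
    (π : X → ℝ) (C : X → Y → ℝ) : ℝ :=
  Real.logb 2 (Vpost π C) - Real.logb 2 (Vprior π)

/-- Min-capacity: supremum of min-entropy leakage over all priors. -/
def MinCap {X Y : Type*} [Fintype X] [Nonempty X] [Fintype Y] (C : X → Y → ℝ) : ℝ :=
  sSup {l : ℝ | ∃ π : X → ℝ, IsPrior π ∧ l = MEL π C}

/-- A deterministic observer: every matrix entry is `0` or `1`. -/
def IsDeterministic {Y Z : Type*} (Obs : Y → Z → ℝ) : Prop :=
  ∀ y z, Obs y z = 0 ∨ Obs y z = 1

/-- A `∼`-observer for the relation `r`. -/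
def IsSimObserver {Y Z : Type*} (r : Y → Y → Prop) (Obs : Y → Z → ℝ) : Prop :=
  ∀ y₁ y₂, r y₁ y₂ ↔ ∀ z, Obs y₁ z = Obs y₂ z

lemma Vprior_pos {X : Type*} [Fintype X] [Nonempty X] {π : X → ℝ}
    (hπ : IsPrior π) : 0 < Vprior π := by
  by_contra h
  push_neg at h
  have : ∑ x, π x ≤ 0 := by
    apply Finset.sum_nonpos
    intro x _
    exact le_trans (Finset.le_sup' π (Finset.mem_univ x)) h
  linarith [hπ.2]

lemma Vprior_le_Vpost {X Y : Type*} [Fintype X] [Nonempty X] [Fintype Y]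
    {π : X → ℝ} {D : X → Y → ℝ} (hπ : IsPrior π) (hD : IsChannel D) :
    Vprior π ≤ Vpost π D := by
  obtain ⟨x0, -, hx0⟩ := Finset.exists_mem_eq_sup' (Finset.univ_nonempty (α := X)) π
  rw [Vprior, hx0]
  calc π x0 = ∑ y, π x0 * D x0 y := by rw [← Finset.mul_sum, hD.2 x0, mul_one]
    _ ≤ Vpost π D := by
        apply Finset.sum_le_sum
        intro y _
        exact Finset.le_sup' (fun x => π x * D x y) (Finset.mem_univ x0)

lemma Vpost_cascade_le {X Y Z : Type*} [Fintype X] [Nonempty X] [Fintype Y] [Fintype Z]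
    {π : X → ℝ} (D : X → Y → ℝ) {R : Y → Z → ℝ} (hR : IsChannel R) :
    Vpost π (cascade D R) ≤ Vpost π D := by
  have key : Vpost π (cascade D R) ≤
      ∑ z, ∑ y, (Finset.univ.sup' Finset.univ_nonempty (fun x => π x * D x y)) * R y z := by
    apply Finset.sum_le_sum
    intro z _
    apply Finset.sup'_le
    intro x _
    rw [cascade, Finset.mul_sum]
    apply Finset.sum_le_sum
    intro y _
    rw [← mul_assoc]
    exact mul_le_mul_of_nonneg_right
      (Finset.le_sup' (fun x => π x * D x y) (Finset.mem_univ x)) (hR.1 y z)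
  calc Vpost π (cascade D R) ≤ _ := key
    _ = ∑ y, (Finset.univ.sup' Finset.univ_nonempty (fun x => π x * D x y)) *
          ∑ z, R y z := by rw [Finset.sum_comm]; simp [Finset.mul_sum]
    _ = Vpost π D := by simp [Vpost, hR.2]

lemma cascade_assoc {X Y Z W : Type*} [Fintype Y] [Fintype Z]
    (C : X → Y → ℝ) (D : Y → Z → ℝ) (E : Z → W → ℝ) :
    cascade C (cascade D E) = cascade (cascade C D) E := by
  funext x w
  simp only [cascade, Finset.mul_sum, Finset.sum_mul]
  rw [Finset.sum_comm]
  congr 1; funext z; congr 1; funext y; ring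

lemma cascade_isChannel {X Y Z : Type*} [Fintype Y] [Fintype Z]
    {C : X → Y → ℝ} {D : Y → Z → ℝ} (hC : IsChannel C) (hD : IsChannel D) :
    IsChannel (cascade C D) := by
  constructor
  · intro x z
    exact Finset.sum_nonneg fun y _ => mul_nonneg (hC.1 x y) (hD.1 y z)
  · intro x
    simp only [cascade]
    rw [Finset.sum_comm]
    simp only [← Finset.mul_sum]
    simp [hD.2, hC.2 x]

lemma MEL_le_log_card {X Y : Type*} [Fintype X] [Nonempty X] [Fintype Y]
    {π : X → ℝ} {D : X → Y → ℝ} (hπ : IsPrior π) (hD : IsChannel D) :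
    MEL π D ≤ Real.logb 2 (Fintype.card Y) := by
  have hY : Nonempty Y := by
    by_contra h
    have := hD.2 (Classical.arbitrary X)
    rw [not_nonempty_iff] at h
    simp [Finset.univ_eq_empty] at this
  have hvp := Vprior_pos hπ
  have hle : Vpost π D ≤ (Fintype.card Y : ℝ) * Vprior π := by
    rw [Vpost]
    calc ∑ y : Y, Finset.univ.sup' Finset.univ_nonempty (fun x => π x * D x y)
        ≤ ∑ _y : Y, Vprior π := by
          apply Finset.sum_le_sum
          intro y _
          apply Finset.sup'_le
          intro x _
          have hD1 : D x y ≤ 1 := by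
            have := hD.2 x
            calc D x y ≤ ∑ y', D x y' :=
              Finset.single_le_sum (fun y' _ => hD.1 x y') (Finset.mem_univ y)
            _ = 1 := this
          calc π x * D x y ≤ π x * 1 := mul_le_mul_of_nonneg_left hD1 (hπ.1 x)
            _ = π x := mul_one _
            _ ≤ Vprior π := Finset.le_sup' π (Finset.mem_univ x)
      _ = (Fintype.card Y : ℝ) * Vprior π := by simp [Finset.sum_const, nsmul_eq_mul]
  have hpos : 0 < Vpost π D := lt_of_lt_of_le hvp (Vprior_le_Vpost hπ hD)
  rw [MEL, sub_le_iff_le_add]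
  calc Real.logb 2 (Vpost π D) ≤ Real.logb 2 ((Fintype.card Y : ℝ) * Vprior π) :=
        Real.logb_le_logb_of_le one_lt_two hpos hle
    _ = Real.logb 2 (Fintype.card Y) + Real.logb 2 (Vprior π) := by
        rw [Real.logb_mul (by positivity) (ne_of_gt hvp)]

/-- a composition-refined observer observes no more min-capacity. -/
theorem refined_observer_minCap_le
    {X Y Z₁ Z₂ : Type*} [Fintype X] [Nonempty X] [Fintype Y] [Fintype Z₁] [Fintype Z₂]
    (C : X → Y → ℝ) (hC : IsChannel C)
    (Obs₁ : Y → Z₁ → ℝ) (Obs₂ : Y → Z₂ → ℝ)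
    (hO₁ : IsChannel Obs₁) (hO₂ : IsChannel Obs₂)
    (href : ∃ R : Z₂ → Z₁ → ℝ, IsChannel R ∧ Obs₁ = cascade Obs₂ R) :
    MinCap (cascade C Obs₁) ≤ MinCap (cascade C Obs₂) := by
  obtain ⟨R, hR, hEq⟩ := href
  have hC2 : IsChannel (cascade C Obs₂) := cascade_isChannel hC hO₂
  have hC1 : IsChannel (cascade C Obs₁) := cascade_isChannel hC hO₁
  have hbdd : BddAbove {l : ℝ | ∃ π : X → ℝ, IsPrior π ∧ l = MEL π (cascade C Obs₂)} := by
    refine ⟨Real.logb 2 (Fintype.card Z₂), ?_⟩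
    rintro l ⟨π, hπ, rfl⟩
    exact MEL_le_log_card hπ hC2
  -- nonemptiness of the first set via the uniform prior
  have hcard : (0 : ℝ) < Fintype.card X := by
    exact_mod_cast Fintype.card_pos
  have huni : IsPrior (fun _ : X => (Fintype.card X : ℝ)⁻¹) := by
    constructor
    · intro x; positivity
    · rw [Finset.sum_const, Finset.card_univ, nsmul_eq_mul]
      field_simp
  refine csSup_le ⟨MEL (fun _ => (Fintype.card X : ℝ)⁻¹) (cascade C Obs₁),
    ⟨(fun _ => (Fintype.card X : ℝ)⁻¹), huni, rfl⟩⟩ ?_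
  rintro l ⟨π, hπ, rfl⟩
  have hmel : MEL π (cascade C Obs₁) ≤ MEL π (cascade C Obs₂) := by
    rw [MEL, MEL]
    apply sub_le_sub_right
    have hpos1 : 0 < Vpost π (cascade C Obs₁) :=
      lt_of_lt_of_le (Vprior_pos hπ) (Vprior_le_Vpost hπ hC1)
    have hle : Vpost π (cascade C Obs₁) ≤ Vpost π (cascade C Obs₂) := by
      rw [hEq, cascade_assoc]
      exact Vpost_cascade_le (cascade C Obs₂) hR
    exact Real.logb_le_logb_of_le one_lt_two hpos1 hle
  calc MEL π (cascade C Obs₁) ≤ MEL π (cascade C Obs₂) := hmel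
    _ ≤ MinCap (cascade C Obs₂) := le_csSup hbdd ⟨π, hπ, rfl⟩
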